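/- Let k ≥ 1 and let σ be a separable state on ℂᵏ ⊗ ℂᵏ, i.e., σ = ∑_{l∈s} p_l (ρ_l ⊗ τ_l) for a finite index set s, nonnegative reals p_l with ∑_l p_l = 1, and k×k positive semidefinite trace-one complex matrices ρ_l, τ_l, where ⊗ is the Kronecker product. Then Re tr(Φ_k · σ) ≤ 1/k. -/

import Mathlib

open scoped Kronecker ComplexOrder

/-- The maximally entangled matrix `Φ_k = (1/k) ∑_{i,j} |ii⟩⟨jj|`. -/
noncomputable def maxEnt (k : ℕ) : Matrix (Fin k × Fin k) (Fin k × Fin k) ℂ :=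
  fun p q => if p.1 = p.2 ∧ q.1 = q.2 then (k : ℂ)⁻¹ else 0

open Matrix in
/-- Core inequality: for PSD matrices `ρ`, `τ`,
`Re ∑_{a,b} ρ b a * τ b a ≤ Re(tr ρ) * Re(tr τ)`. -/
lemma key_psd_sum_le {k : ℕ} {ρ τ : Matrix (Fin k) (Fin k) ℂ}
    (hρ : ρ.PosSemidef) (hτ : τ.PosSemidef) :
    (∑ a : Fin k, ∑ b : Fin k, ρ b a * τ b a).re ≤ ρ.trace.re * τ.trace.re := by
  obtain ⟨B, rfl⟩ : ∃ B : Matrix (Fin k) (Fin k) ℂ, ρ = Bᴴ * B := by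
    open scoped MatrixOrder in exact CStarAlgebra.nonneg_iff_eq_star_mul_self.mp hρ.nonneg
  obtain ⟨C, rfl⟩ : ∃ C : Matrix (Fin k) (Fin k) ℂ, τ = Cᴴ * C := by
    open scoped MatrixOrder in exact CStarAlgebra.nonneg_iff_eq_star_mul_self.mp hτ.nonneg
  have hS : (∑ a : Fin k, ∑ b : Fin k, (Bᴴ * B) b a * (Cᴴ * C) b a)
      = ∑ m : Fin k, ∑ n : Fin k,
        (∑ a : Fin k, B m a * C n a) * (starRingEnd ℂ) (∑ b : Fin k, B m b * C n b) := by
    calc (∑ a : Fin k, ∑ b : Fin k, (Bᴴ * B) b a * (Cᴴ * C) b a)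
        = ∑ a : Fin k, ∑ b : Fin k, ∑ m : Fin k, ∑ n : Fin k,
            star (B m b) * B m a * (star (C n b) * C n a) := by
          refine Finset.sum_congr rfl fun a _ => Finset.sum_congr rfl fun b _ => ?_
          simp only [Matrix.mul_apply, Matrix.conjTranspose_apply]
          rw [Finset.sum_mul_sum]
      _ = ∑ a : Fin k, ∑ m : Fin k, ∑ b : Fin k, ∑ n : Fin k,
            star (B m b) * B m a * (star (C n b) * C n a) :=
          Finset.sum_congr rfl fun a _ => Finset.sum_comm
      _ = ∑ m : Fin k, ∑ a : Fin k, ∑ b : Fin k, ∑ n : Fin k,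
            star (B m b) * B m a * (star (C n b) * C n a) := Finset.sum_comm
      _ = ∑ m : Fin k, ∑ a : Fin k, ∑ n : Fin k, ∑ b : Fin k,
            star (B m b) * B m a * (star (C n b) * C n a) :=
          Finset.sum_congr rfl fun m _ => Finset.sum_congr rfl fun a _ => Finset.sum_comm
      _ = ∑ m : Fin k, ∑ n : Fin k, ∑ a : Fin k, ∑ b : Fin k,
            star (B m b) * B m a * (star (C n b) * C n a) :=
          Finset.sum_congr rfl fun m _ => Finset.sum_comm
      _ = _ := by
          refine Finset.sum_congr rfl fun m _ => Finset.sum_congr rfl fun n _ => ?_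
          rw [map_sum, Finset.sum_mul_sum]
          refine Finset.sum_congr rfl fun a _ => Finset.sum_congr rfl fun b _ => ?_
          simp only [starRingEnd_apply, star_mul']
          ring
  have htr : ∀ (D : Matrix (Fin k) (Fin k) ℂ),
      (Dᴴ * D).trace.re = ∑ m : Fin k, ∑ a : Fin k, Complex.normSq (D m a) := by
    intro D
    simp only [Matrix.trace, Matrix.diag, Matrix.mul_apply, Matrix.conjTranspose_apply,
      Complex.re_sum]
    rw [Finset.sum_comm]
    refine Finset.sum_congr rfl fun m _ => Finset.sum_congr rfl fun a _ => ?_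
    rw [Complex.star_def, mul_comm, Complex.mul_conj]
    simp
  rw [hS, htr, htr]
  have hre : (∑ m : Fin k, ∑ n : Fin k,
      (∑ a : Fin k, B m a * C n a) * (starRingEnd ℂ) (∑ b : Fin k, B m b * C n b)).re
      = ∑ m : Fin k, ∑ n : Fin k, Complex.normSq (∑ a : Fin k, B m a * C n a) := by
    simp only [Complex.re_sum]
    refine Finset.sum_congr rfl fun m _ => Finset.sum_congr rfl fun n _ => ?_
    rw [Complex.mul_conj]
    simp
  rw [hre, Finset.sum_mul_sum]
  refine Finset.sum_le_sum fun m _ => Finset.sum_le_sum fun n _ => ?_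
  calc Complex.normSq (∑ a : Fin k, B m a * C n a)
      = ‖∑ a : Fin k, B m a * C n a‖ ^ 2 := (Complex.sq_norm _).symm
    _ ≤ (∑ a : Fin k, ‖B m a‖ * ‖C n a‖) ^ 2 := by
        refine pow_le_pow_left₀ (norm_nonneg _) ?_ 2
        refine (norm_sum_le _ _).trans_eq ?_
        exact Finset.sum_congr rfl fun a _ => norm_mul _ _
    _ ≤ (∑ a : Fin k, ‖B m a‖ ^ 2) * ∑ a : Fin k, ‖C n a‖ ^ 2 :=
        Finset.sum_mul_sq_le_sq_mul_sq _ _ _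
    _ = (∑ a : Fin k, Complex.normSq (B m a)) * ∑ a : Fin k, Complex.normSq (C n a) := by
        simp [Complex.sq_norm]

/-- Trace of the maximally entangled matrix against a Kronecker product. -/
lemma trace_maxEnt_kron {k : ℕ} (ρ τ : Matrix (Fin k) (Fin k) ℂ) :
    (maxEnt k * (ρ ⊗ₖ τ)).trace = (k:ℂ)⁻¹ * ∑ a : Fin k, ∑ b : Fin k, ρ b a * τ b a := by
  simp only [Matrix.trace, Matrix.diag, Matrix.mul_apply, Matrix.kroneckerMap_apply, maxEnt]
  rw [Fintype.sum_prod_type]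
  simp only [Fintype.sum_prod_type, ite_mul, zero_mul, ite_and, Finset.sum_ite_irrel,
    Finset.sum_ite_eq, Finset.sum_ite_eq', Finset.mem_univ, if_true, Finset.mul_sum]
  simp [Finset.sum_const_zero]

/-- For any separable state `σ = ∑_l p_l (ρ_l ⊗ τ_l)` on `ℂᵏ ⊗ ℂᵏ`, the overlap with the
maximally entangled state satisfies `Re tr(Φ_k σ) ≤ 1/k`. -/
theorem trace_maxEnt_separable_le {k : ℕ} (hk : 1 ≤ k) {ι : Type*} (s : Finset ι)
    (p : ι → ℝ) (ρ τ : ι → Matrix (Fin k) (Fin k) ℂ)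
    (hp : ∀ l ∈ s, 0 ≤ p l) (hpsum : ∑ l ∈ s, p l = 1)
    (hρ : ∀ l ∈ s, (ρ l).PosSemidef ∧ (ρ l).trace = 1)
    (hτ : ∀ l ∈ s, (τ l).PosSemidef ∧ (τ l).trace = 1)
    (σ : Matrix (Fin k × Fin k) (Fin k × Fin k) ℂ)
    (hσ : σ = ∑ l ∈ s, p l • (ρ l ⊗ₖ τ l)) :
    ((maxEnt k * σ).trace).re ≤ 1 / k := by
  subst hσ
  rw [Finset.mul_sum, Matrix.trace_sum]
  simp only [Matrix.mul_smul, Matrix.trace_smul, Complex.re_sum, Complex.smul_re]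
  have hbound : ∀ l ∈ s, ((maxEnt k * (ρ l ⊗ₖ τ l)).trace).re ≤ 1 / k := by
    intro l hl
    rw [trace_maxEnt_kron]
    have hcast : ((k:ℂ))⁻¹ = (((k:ℝ)⁻¹ : ℝ) : ℂ) := by push_cast; ring
    rw [hcast, Complex.re_ofReal_mul, one_div]
    have h1 : (∑ a : Fin k, ∑ b : Fin k, (ρ l) b a * (τ l) b a).re ≤ 1 := by
      have := key_psd_sum_le (hρ l hl).1 (hτ l hl).1
      rwa [(hρ l hl).2, (hτ l hl).2, Complex.one_re, one_mul] at this
    calc (k:ℝ)⁻¹ * (∑ a : Fin k, ∑ b : Fin k, (ρ l) b a * (τ l) b a).re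
        ≤ (k:ℝ)⁻¹ * 1 := mul_le_mul_of_nonneg_left h1 (by positivity)
      _ = (k:ℝ)⁻¹ := mul_one _
  calc ∑ l ∈ s, p l * ((maxEnt k * (ρ l ⊗ₖ τ l)).trace).re
      ≤ ∑ l ∈ s, p l * (1 / k) :=
        Finset.sum_le_sum fun l hl => mul_le_mul_of_nonneg_left (hbound l hl) (hp l hl)
    _ = 1 / k := by rw [← Finset.sum_mul, hpsum, one_mul]
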